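/- Let x and y be rational numbers with 0 < x < 1 and -x < y < 0, and set q = (x-1)(y-1) and γ = y-1. Then for every matroid M on a finite ground set E with no loops, (-1)^{r(E)} · Z̃(M;q,γ) > 0, where r is the rank function of M. -/

import Mathlib

/-- A matroid on a finite ground set `E`, presented by its rank function. -/
structure RankMatroid (α : Type) [DecidableEq α] where
  /-- the ground set -/
  E : Finset α
  /-- the rank function -/
  r : Finset α → ℕ
  rank_le_card : ∀ A, A ⊆ E → r A ≤ A.card
  rank_mono : ∀ A B, A ⊆ B → B ⊆ E → r A ≤ r B
  rank_submodular : ∀ A B, A ⊆ E → B ⊆ E → r (A ∪ B) + r (A ∩ B) ≤ r A + r B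


/-- The matroid Tutte polynomial with constant edge weight `γ`:
`Z̃(M;q,γ) = Σ_{A⊆E} q^{-r(A)} γ^{|A|}`. -/
noncomputable def Ztc {α : Type} [DecidableEq α] (M : RankMatroid α) (q γ : ℚ) : ℚ :=
  ∑ A ∈ M.E.powerset, q ^ (-(M.r A : ℤ)) * γ ^ A.card

/-- A loop of a matroid: an element of the ground set of rank `0`. -/
def RankMatroid.IsLoop {α : Type} [DecidableEq α] (M : RankMatroid α) (e : α) : Prop :=
  e ∈ M.E ∧ M.r {e} = 0

namespace TutteAux

open Finset

variable {α : Type} [DecidableEq α]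

noncomputable def Zw (M : RankMatroid α) (q : ℚ) (v : α → ℚ) : ℚ :=
  ∑ A ∈ M.E.powerset, q ^ (-(M.r A : ℤ)) * ∏ e ∈ A, v e

lemma r_empty (M : RankMatroid α) : M.r ∅ = 0 := by
  simpa using M.rank_le_card ∅ (Finset.empty_subset _)

lemma r_singleton_le (M : RankMatroid α) {e : α} (he : e ∈ M.E) : M.r {e} ≤ 1 := by
  simpa using M.rank_le_card {e} (by simpa using he)

lemma r_insert_le (M : RankMatroid α) {e : α} (he : e ∈ M.E) {A : Finset α} (hA : A ⊆ M.E) :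
    M.r (insert e A) ≤ M.r A + 1 := by
  have h2 := M.rank_submodular A {e} hA (by simpa using he)
  have h3 : M.r {e} ≤ 1 := r_singleton_le M he
  have h4 : A ∪ {e} = insert e A := by rw [union_comm, ← insert_eq]
  rw [h4] at h2
  omega

def del (M : RankMatroid α) (e : α) : RankMatroid α where
  E := M.E.erase e
  r := M.r
  rank_le_card A hA := M.rank_le_card A (hA.trans (erase_subset _ _))
  rank_mono A B hAB hB := M.rank_mono A B hAB (hB.trans (erase_subset _ _))
  rank_submodular A B hA hB :=
    M.rank_submodular A B (hA.trans (erase_subset _ _)) (hB.trans (erase_subset _ _))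

@[simp] lemma del_E (M : RankMatroid α) (e : α) : (del M e).E = M.E.erase e := rfl
@[simp] lemma del_r (M : RankMatroid α) (e : α) : (del M e).r = M.r := rfl

def contr (M : RankMatroid α) (e : α) (he : e ∈ M.E) (h1 : M.r {e} = 1) : RankMatroid α where
  E := M.E.erase e
  r A := M.r (insert e A) - 1
  rank_le_card A hA := by
    have hAE : A ⊆ M.E := hA.trans (erase_subset _ _)
    have h : insert e A ⊆ M.E := insert_subset he hAE
    have hc := M.rank_le_card _ h
    have heA : e ∉ A := fun h' => (mem_erase.mp (hA h')).1 rfl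
    rw [card_insert_of_notMem heA] at hc
    omega
  rank_mono A B hAB hB :=
    Nat.sub_le_sub_right (M.rank_mono _ _ (insert_subset_insert _ hAB)
      (insert_subset he (hB.trans (erase_subset _ _)))) 1
  rank_submodular A B hA hB := by
    have hAE : insert e A ⊆ M.E := insert_subset he (hA.trans (erase_subset _ _))
    have hBE : insert e B ⊆ M.E := insert_subset he (hB.trans (erase_subset _ _))
    have hsub := M.rank_submodular (insert e A) (insert e B) hAE hBE
    have hu : insert e A ∪ insert e B = insert e (A ∪ B) := by
      rw [insert_union, union_insert, insert_idem]
    have hi : insert e A ∩ insert e B = insert e (A ∩ B) := (insert_inter_distrib A B e).symm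
    rw [hu, hi] at hsub
    have h1A : 1 ≤ M.r (insert e A) := h1 ▸ M.rank_mono {e} (insert e A) (by simp) hAE
    have h1B : 1 ≤ M.r (insert e B) := h1 ▸ M.rank_mono {e} (insert e B) (by simp) hBE
    have h1U : 1 ≤ M.r (insert e (A ∪ B)) :=
      h1 ▸ M.rank_mono {e} _ (by simp) (insert_subset he (union_subset
        (hA.trans (erase_subset _ _)) (hB.trans (erase_subset _ _))))
    have h1I : 1 ≤ M.r (insert e (A ∩ B)) :=
      h1 ▸ M.rank_mono {e} _ (by simp) (insert_subset he
        ((inter_subset_left.trans hA).trans (erase_subset _ _)))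
    omega

@[simp] lemma contr_E (M : RankMatroid α) (e : α) (he : e ∈ M.E) (h1 : M.r {e} = 1) :
    (contr M e he h1).E = M.E.erase e := rfl
@[simp] lemma contr_r (M : RankMatroid α) (e : α) (he : e ∈ M.E) (h1 : M.r {e} = 1)
    (A : Finset α) : (contr M e he h1).r A = M.r (insert e A) - 1 := rfl

lemma Zw_dc (M : RankMatroid α) (e : α) (he : e ∈ M.E) (h1 : M.r {e} = 1)
    (q : ℚ) (hq : q ≠ 0) (v : α → ℚ) :
    Zw M q v = Zw (del M e) q v + v e * q⁻¹ * Zw (contr M e he h1) q v := by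
  unfold Zw
  simp only [del_E, del_r, contr_E, contr_r]
  rw [show M.E = insert e (M.E.erase e) from (insert_erase he).symm,
    Finset.sum_powerset_insert (notMem_erase e M.E)]
  rw [insert_erase he]
  congr 1
  rw [Finset.mul_sum]
  apply Finset.sum_congr rfl
  intro A hA
  have hAs : A ⊆ M.E.erase e := mem_powerset.mp hA
  have heA : e ∉ A := fun h' => (mem_erase.mp (hAs h')).1 rfl
  have hAE : insert e A ⊆ M.E := insert_subset he (hAs.trans (erase_subset _ _))
  have hm : 1 ≤ M.r (insert e A) := h1 ▸ M.rank_mono {e} (insert e A) (by simp) hAE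
  rw [Finset.prod_insert heA]
  have hc : (-(M.r (insert e A) : ℤ)) = (-(((M.r (insert e A) - 1 : ℕ)) : ℤ)) + (-1) := by
    omega
  rw [hc, zpow_add₀ hq, zpow_neg_one]
  ring

lemma coloop_rank (M : RankMatroid α) {e : α} (he : e ∈ M.E)
    (hco : M.r (M.E.erase e) < M.r M.E) {A : Finset α} (hA : A ⊆ M.E.erase e) :
    M.r (insert e A) = M.r A + 1 := by
  have hAE : A ⊆ M.E := hA.trans (erase_subset _ _)
  have heA : e ∉ A := fun h' => (mem_erase.mp (hA h')).1 rfl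
  have hle : M.r (insert e A) ≤ M.r A + 1 := r_insert_le M he hAE
  have hsub := M.rank_submodular (insert e A) (M.E.erase e)
    (insert_subset he hAE) (erase_subset _ _)
  have hu : insert e A ∪ M.E.erase e = M.E := by
    rw [insert_union, Finset.union_eq_right.mpr hA]
    exact insert_erase he
  have hi : insert e A ∩ M.E.erase e = A := by
    ext a
    simp only [mem_inter, mem_insert]
    constructor
    · rintro ⟨rfl | h1, h2⟩
      · exact absurd rfl (mem_erase.mp h2).1
      · exact h1
    · intro ha
      exact ⟨Or.inr ha, hA ha⟩
  rw [hu, hi] at hsub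
  omega

lemma parallel_rank (M : RankMatroid α) {e f : α} (he : e ∈ M.E) (hf : f ∈ M.E)
    (hef : e ≠ f) (h1e : M.r {e} = 1) (h1f : M.r {f} = 1) (hp : M.r {e, f} = 1)
    {A : Finset α} (hA : A ⊆ M.E) (heA : e ∉ A) (hfA : f ∉ A) :
    M.r (insert f (insert e A)) = M.r (insert e A) ∧
      M.r (insert f A) = M.r (insert e A) := by
  have hefE : ({e, f} : Finset α) ⊆ M.E := by
    intro a ha
    rcases mem_insert.mp ha with rfl | ha
    · exact he
    · rw [mem_singleton.mp ha]; exact hf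
  have heAE : insert e A ⊆ M.E := insert_subset he hA
  have hfAE : insert f A ⊆ M.E := insert_subset hf hA
  have hfeAE : insert f (insert e A) ⊆ M.E := insert_subset hf heAE
  -- first identity
  have hu1 : insert e A ∪ ({e, f} : Finset α) = insert f (insert e A) := by
    ext a
    simp only [mem_union, mem_insert, mem_singleton]
    tauto
  have hi1 : insert e A ∩ ({e, f} : Finset α) = {e} := by
    ext a
    simp only [mem_inter, mem_insert, mem_singleton]
    constructor
    · rintro ⟨h1, rfl | rfl⟩
      · rfl
      · rcases h1 with h | h
        · exact absurd h (Ne.symm hef)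
        · exact absurd h hfA
    · rintro rfl
      exact ⟨Or.inl rfl, Or.inl rfl⟩
  have hs1 := M.rank_submodular (insert e A) {e, f} heAE hefE
  rw [hu1, hi1, h1e, hp] at hs1
  have hm1 : M.r (insert e A) ≤ M.r (insert f (insert e A)) :=
    M.rank_mono _ _ (subset_insert _ _) hfeAE
  have heq1 : M.r (insert f (insert e A)) = M.r (insert e A) := by omega
  -- second identity
  have hu2 : insert f A ∪ ({e, f} : Finset α) = insert f (insert e A) := by
    ext a
    simp only [mem_union, mem_insert, mem_singleton]
    tauto
  have hi2 : insert f A ∩ ({e, f} : Finset α) = {f} := by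
    ext a
    simp only [mem_inter, mem_insert, mem_singleton]
    constructor
    · rintro ⟨h1, rfl | rfl⟩
      · rcases h1 with h | h
        · exact absurd h hef
        · exact absurd h heA
      · rfl
    · rintro rfl
      exact ⟨Or.inl rfl, Or.inr rfl⟩
  have hs2 := M.rank_submodular (insert f A) {e, f} hfAE hefE
  rw [hu2, hi2, h1f, hp] at hs2
  have hm2 : M.r (insert f A) ≤ M.r (insert f (insert e A)) :=
    M.rank_mono _ _ (insert_subset_insert _ (subset_insert _ _)) hfeAE
  exact ⟨heq1, by omega⟩

lemma Zw_merge (M : RankMatroid α) {e f : α} (he : e ∈ M.E) (hf : f ∈ M.E)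
    (hef : e ≠ f) (h1e : M.r {e} = 1) (h1f : M.r {f} = 1) (hp : M.r {e, f} = 1)
    (q : ℚ) (v : α → ℚ) :
    Zw M q v = Zw (del M f) q (Function.update v e (v e + v f + v e * v f)) := by
  set v' := Function.update v e (v e + v f + v e * v f) with hv'
  set S := (M.E.erase f).erase e with hSdef
  have hSE : S ⊆ M.E := (erase_subset _ _).trans (erase_subset _ _)
  have heS : e ∉ S := notMem_erase _ _
  have hfS' : f ∉ S := fun h => (mem_erase.mp (mem_erase.mp h).2).1 rfl
  have hfS : f ∉ insert e S := by
    simp only [mem_insert]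
    rintro (h | h)
    · exact hef h.symm
    · exact hfS' h
  have hEf : M.E.erase f = insert e S := by
    rw [hSdef, insert_erase (mem_erase.mpr ⟨hef, he⟩)]
  have hE : M.E = insert f (insert e S) := by
    rw [← hEf, insert_erase hf]
  unfold Zw
  simp only [del_E, del_r, hEf]
  rw [hE, Finset.sum_powerset_insert hfS, Finset.sum_powerset_insert heS,
    Finset.sum_powerset_insert heS, Finset.sum_powerset_insert heS]
  have hprod : ∀ A : Finset α, A ⊆ S → (∏ x ∈ A, v' x) = ∏ x ∈ A, v x := by
    intro A hA
    exact Finset.prod_congr rfl fun x hx =>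
      Function.update_of_ne (fun hxe => heS (by rw [← hxe]; exact hA hx)) _ _
  have ha : (∑ A ∈ S.powerset, q ^ (-(M.r A : ℤ)) * ∏ x ∈ A, v x)
      = ∑ A ∈ S.powerset, q ^ (-(M.r A : ℤ)) * ∏ x ∈ A, v' x := by
    exact Finset.sum_congr rfl fun A hA => by rw [hprod A (mem_powerset.mp hA)]
  have hcomb : ((∑ A ∈ S.powerset, q ^ (-(M.r (insert e A) : ℤ)) * ∏ x ∈ insert e A, v x)
        + (∑ A ∈ S.powerset, q ^ (-(M.r (insert f A) : ℤ)) * ∏ x ∈ insert f A, v x))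
        + (∑ A ∈ S.powerset, q ^ (-(M.r (insert f (insert e A)) : ℤ))
            * ∏ x ∈ insert f (insert e A), v x)
      = ∑ A ∈ S.powerset, q ^ (-(M.r (insert e A) : ℤ)) * ∏ x ∈ insert e A, v' x := by
    rw [← Finset.sum_add_distrib, ← Finset.sum_add_distrib]
    apply Finset.sum_congr rfl
    intro A hA
    have hAS : A ⊆ S := mem_powerset.mp hA
    have heA : e ∉ A := fun h => heS (hAS h)
    have hfA : f ∉ A := fun h => hfS' (hAS h)
    have hfeA : f ∉ insert e A := by
      simp only [mem_insert]
      rintro (h | h)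
      · exact hef h.symm
      · exact hfA h
    obtain ⟨hr1, hr2⟩ := parallel_rank M he hf hef h1e h1f hp (hAS.trans hSE) heA hfA
    rw [hr1, hr2, Finset.prod_insert heA, Finset.prod_insert hfA,
      Finset.prod_insert hfeA, Finset.prod_insert heA, Finset.prod_insert heA,
      hprod A hAS, hv', Function.update_self]
    ring
  calc (∑ A ∈ S.powerset, q ^ (-(M.r A : ℤ)) * ∏ x ∈ A, v x)
        + (∑ A ∈ S.powerset, q ^ (-(M.r (insert e A) : ℤ)) * ∏ x ∈ insert e A, v x)
        + ((∑ A ∈ S.powerset, q ^ (-(M.r (insert f A) : ℤ)) * ∏ x ∈ insert f A, v x)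
        + (∑ A ∈ S.powerset, q ^ (-(M.r (insert f (insert e A)) : ℤ))
            * ∏ x ∈ insert f (insert e A), v x))
      = (∑ A ∈ S.powerset, q ^ (-(M.r A : ℤ)) * ∏ x ∈ A, v' x)
        + ∑ A ∈ S.powerset, q ^ (-(M.r (insert e A) : ℤ)) * ∏ x ∈ insert e A, v' x := by
        rw [← ha, ← hcomb]; ring

lemma key (x y : ℚ) (hx0 : 0 < x) (hx1 : x < 1) (hyx : -x < y) (hy0 : y < 0) :
    ∀ (n : ℕ) (M : RankMatroid α) (v : α → ℚ), M.E.card = n →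
      (∀ e ∈ M.E, M.r {e} = 1) →
      (∀ e ∈ M.E, ∃ k : ℕ, 1 ≤ k ∧ 1 + v e = y ^ k) →
      0 < (-1 : ℚ) ^ (M.r M.E) * Zw M ((x - 1) * (y - 1)) v := by
  set q : ℚ := (x - 1) * (y - 1) with hqdef
  have hq0 : 0 < q := by rw [hqdef]; nlinarith
  have hq : q ≠ 0 := ne_of_gt hq0
  have hyabs : -y < x := by linarith
  have hwlt : ∀ k : ℕ, 1 ≤ k → y ^ k < x := by
    intro k hk
    calc y ^ k ≤ |y ^ k| := le_abs_self _
      _ = |y| ^ k := abs_pow y k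
      _ ≤ |y| ^ 1 := pow_le_pow_of_le_one (abs_nonneg y)
          (by rw [abs_of_neg hy0]; linarith) hk
      _ = |y| := pow_one _
      _ < x := by rw [abs_of_neg hy0]; linarith
  have hwneg : ∀ k : ℕ, 1 ≤ k → y ^ k - 1 < 0 := fun k hk => by
    have := hwlt k hk; linarith
  have hwq : ∀ k : ℕ, 1 ≤ k → q + (y ^ k - 1) < 0 := by
    intro k hk
    rcases Nat.lt_or_ge k 2 with hk2 | hk2
    · interval_cases k
      rw [hqdef]; nlinarith
    · have h2 : y ^ k ≤ y ^ 2 := by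
        calc y ^ k ≤ |y ^ k| := le_abs_self _
          _ = |y| ^ k := abs_pow y k
          _ ≤ |y| ^ 2 := pow_le_pow_of_le_one (abs_nonneg y)
              (by rw [abs_of_neg hy0]; linarith) hk2
          _ = y ^ 2 := sq_abs y
      have hkey : 0 < (-y) * (x + y) := mul_pos (by linarith) (by linarith)
      rw [hqdef]; nlinarith
  intro n
  induction n using Nat.strong_induction_on with
  | _ n ih =>
  intro M v hcard hL hv
  by_cases hE : M.E = ∅
  · have hr0 : M.r M.E = 0 := by rw [hE]; exact r_empty M
    rw [hr0, pow_zero, one_mul]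
    unfold Zw
    rw [hE, powerset_empty, Finset.sum_singleton, r_empty, Finset.prod_empty]
    norm_num
  · obtain ⟨e, he⟩ := Finset.nonempty_iff_ne_empty.mpr hE
    have hn0 : n ≠ 0 := by
      intro h
      rw [h] at hcard
      exact hE (Finset.card_eq_zero.mp hcard)
    have h1e : M.r {e} = 1 := hL e he
    by_cases hpar : ∃ f ∈ M.E, f ≠ e ∧ M.r {e, f} ≤ 1
    · -- parallel pair: merge
      obtain ⟨f, hf, hfe, hrp⟩ := hpar
      have hef : e ≠ f := Ne.symm hfe
      have h1f : M.r {f} = 1 := hL f hf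
      have hefE : ({e, f} : Finset α) ⊆ M.E := by
        intro a ha
        rcases mem_insert.mp ha with rfl | ha
        · exact he
        · rw [mem_singleton.mp ha]; exact hf
      have hp : M.r {e, f} = 1 := by
        have hge : 1 ≤ M.r {e, f} := h1e ▸ M.rank_mono {e} {e, f} (by simp) hefE
        omega
      set v' := Function.update v e (v e + v f + v e * v f) with hv'def
      have hmerge := Zw_merge M he hf hef h1e h1f hp q v
      -- top rank preserved
      have heEf : e ∈ M.E.erase f := mem_erase.mpr ⟨hef, he⟩
      have htop : M.r (M.E.erase f) = M.r M.E := by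
        have hS : ((M.E.erase f).erase e) ⊆ M.E := (erase_subset _ _).trans (erase_subset _ _)
        have heS : e ∉ (M.E.erase f).erase e := notMem_erase _ _
        have hfS : f ∉ (M.E.erase f).erase e :=
          fun h => (mem_erase.mp (mem_erase.mp h).2).1 rfl
        obtain ⟨hr1, _⟩ := parallel_rank M he hf hef h1e h1f hp hS heS hfS
        have hEf : M.E.erase f = insert e ((M.E.erase f).erase e) :=
          (insert_erase heEf).symm
        have hE2 : M.E = insert f (insert e ((M.E.erase f).erase e)) := by
          rw [← hEf, insert_erase hf]
        conv_lhs => rw [hEf]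
        conv_rhs => rw [hE2]
        exact hr1.symm
      have hcard' : (del M f).E.card = n - 1 := by
        simp only [del_E]
        rw [card_erase_of_mem hf, hcard]
      have hL' : ∀ g ∈ (del M f).E, (del M f).r {g} = 1 :=
        fun g hg => hL g (mem_of_mem_erase hg)
      have hv'' : ∀ g ∈ (del M f).E, ∃ k : ℕ, 1 ≤ k ∧ 1 + v' g = y ^ k := by
        intro g hg
        by_cases hge : g = e
        · subst hge
          obtain ⟨k1, hk1, he1⟩ := hv g he
          obtain ⟨k2, hk2, hf2⟩ := hv f hf
          refine ⟨k1 + k2, by omega, ?_⟩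
          rw [hv'def, Function.update_self, pow_add, ← he1, ← hf2]
          ring
        · obtain ⟨k, hk, hk2⟩ := hv g (mem_of_mem_erase hg)
          exact ⟨k, hk, by rw [hv'def, Function.update_of_ne hge]; exact hk2⟩
      have hres := ih (n - 1) (by omega) (del M f) v' hcard' hL' hv''
      rw [hmerge]
      have : (del M f).r (del M f).E = M.r M.E := htop
      rw [← this]
      exact hres
    · -- no parallel element to e
      push_neg at hpar
      -- every f ≠ e in E has r {e,f} = 2
      have hpair : ∀ f ∈ M.E.erase e, M.r {e, f} = 2 := by
        intro f hfe
        obtain ⟨hfne, hfE⟩ := mem_erase.mp hfe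
        have h2 : 1 < M.r {e, f} := hpar f hfE hfne
        have hle2 : M.r {e, f} ≤ 2 := by
          have := M.rank_le_card {e, f} (by
            intro a ha
            rcases mem_insert.mp ha with rfl | ha
            · exact he
            · rw [mem_singleton.mp ha]; exact hfE)
          have hc2 : ({e, f} : Finset α).card ≤ 2 := card_insert_le _ _ |>.trans (by simp)
          omega
        omega
      set N := contr M e he h1e with hNdef
      have hcardN : N.E.card = n - 1 := by
        simp only [hNdef, contr_E]
        rw [card_erase_of_mem he, hcard]
      have hLN : ∀ g ∈ N.E, N.r {g} = 1 := by
        intro g hg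
        have h2 := hpair g hg
        simp only [hNdef, contr_r]
        have : insert e ({g} : Finset α) = {e, g} := rfl
        rw [this, h2]
      have hvN : ∀ g ∈ N.E, ∃ k : ℕ, 1 ≤ k ∧ 1 + v g = y ^ k :=
        fun g hg => hv g (mem_of_mem_erase hg)
      have htopN : N.r N.E = M.r M.E - 1 := by
        simp only [hNdef, contr_E, contr_r]
        rw [insert_erase he]
      have hm1 : 1 ≤ M.r M.E := h1e ▸ M.rank_mono {e} M.E (by simpa using he) (le_refl _)
      obtain ⟨m', hm'⟩ := Nat.exists_eq_add_of_le hm1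
      have htopN' : N.r N.E = m' := by omega
      have hresN := ih (n - 1) (by omega) N v hcardN hLN hvN
      rw [htopN'] at hresN
      -- weight of e
      obtain ⟨k, hk1, hk2⟩ := hv e he
      have hveneg : v e < 0 := by have := hwneg k hk1; linarith
      have hveq : q + v e < 0 := by have := hwq k hk1; linarith
      have hdc := Zw_dc M e he h1e q hq v
      by_cases hco : M.r (M.E.erase e) = M.r M.E
      · -- not a coloop
        have hcardD : (del M e).E.card = n - 1 := by
          simp only [del_E]
          rw [card_erase_of_mem he, hcard]
        have hLD : ∀ g ∈ (del M e).E, (del M e).r {g} = 1 :=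
          fun g hg => hL g (mem_of_mem_erase hg)
        have hvD : ∀ g ∈ (del M e).E, ∃ k : ℕ, 1 ≤ k ∧ 1 + v g = y ^ k :=
          fun g hg => hv g (mem_of_mem_erase hg)
        have hresD := ih (n - 1) (by omega) (del M e) v hcardD hLD hvD
        have htopD : (del M e).r (del M e).E = M.r M.E := hco
        rw [htopD] at hresD
        rw [hdc]
        have hexp : (-1 : ℚ) ^ (M.r M.E) * (Zw (del M e) q v + v e * q⁻¹ * Zw N q v)
            = (-1 : ℚ) ^ (M.r M.E) * Zw (del M e) q v
              + (-(v e) * q⁻¹) * ((-1 : ℚ) ^ m' * Zw N q v) := by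
          rw [hm', pow_add, pow_one]
          ring
        rw [hexp]
        have hpos : 0 < (-(v e) * q⁻¹) * ((-1 : ℚ) ^ m' * Zw N q v) :=
          mul_pos (mul_pos (by linarith) (inv_pos.mpr hq0)) hresN
        linarith
      · -- coloop
        have hlt : M.r (M.E.erase e) < M.r M.E :=
          lt_of_le_of_ne (M.rank_mono _ _ (erase_subset _ _) (le_refl _)) hco
        have hZdZc : Zw (del M e) q v = Zw N q v := by
          unfold Zw
          simp only [del_E, del_r, hNdef, contr_E, contr_r]
          apply Finset.sum_congr rfl
          intro A hA
          rw [coloop_rank M he hlt (mem_powerset.mp hA), Nat.add_sub_cancel]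
        rw [hdc, hZdZc]
        have hexp : (-1 : ℚ) ^ (M.r M.E) * (Zw N q v + v e * q⁻¹ * Zw N q v)
            = (-(q + v e) * q⁻¹) * ((-1 : ℚ) ^ m' * Zw N q v) := by
          rw [hm', pow_add, pow_one]
          field_simp
        rw [hexp]
        exact mul_pos (mul_pos (by linarith) (inv_pos.mpr hq0)) hresN

end TutteAux

/-- for rationals `0 < x < 1`, `-x < y < 0`, with `q = (x-1)(y-1)` and
`γ = y - 1`, every loopless matroid `M` on a finite ground set `E` satisfies
`(-1)^{r(E)}·Z̃(M;q,γ) > 0`. -/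

theorem matroid_tutte_sign_regionL {α : Type} [DecidableEq α] (x y : ℚ)
    (hx0 : 0 < x) (hx1 : x < 1) (hyx : -x < y) (hy0 : y < 0)
    (M : RankMatroid α) (hloopless : ∀ e ∈ M.E, ¬ M.IsLoop e) :
    0 < (-1 : ℚ) ^ M.r M.E * Ztc M ((x - 1) * (y - 1)) (y - 1) := by
  have hZ : Ztc M ((x - 1) * (y - 1)) (y - 1)
      = TutteAux.Zw M ((x - 1) * (y - 1)) (fun _ => y - 1) := by
    unfold Ztc TutteAux.Zw
    exact Finset.sum_congr rfl fun A hA => by rw [Finset.prod_const]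
  rw [hZ]
  refine TutteAux.key x y hx0 hx1 hyx hy0 M.E.card M (fun _ => y - 1) rfl ?_ ?_
  · intro e he
    have hle : M.r {e} ≤ 1 := TutteAux.r_singleton_le M he
    have hne : M.r {e} ≠ 0 := fun h => hloopless e he ⟨he, h⟩
    omega
  · intro e he
    exact ⟨1, le_refl 1, by rw [pow_one]; ring⟩
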